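/- arXiv:1608.01081 — 13 statements merged into one kernel-verified Lean document; each statement's English description precedes it below -/
import Mathlib

section
/- Let m ≥ 2, let P_1,…,P_m ≥ 0 be transmit powers with Σ_{i=1}^m P_i ≤ P_t, let γ_1,…,γ_m > 0 be channel gains with γ_1 ≥ γ_i for all i, and let P_tol ≥ 0. If the downlink SIC power constraints (P_i − Σ_{j=1}^{i−1} P_j)·γ_{i−1} ≥ P_tol hold for every i = 2,…,m, then the power of the highest channel gain user satisfies P_1 ≤ P_t/2^{m−1} − (1 − 2^{−(m−1)})·P_tol/γ_1; in particular P_1 ≤ P_t/2^{m−1}. -/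
/-- Lemma 1 (downlink NOMA): under the SIC power constraints, the power of the
highest channel gain user satisfies
`P 1 ≤ Pt/2^(m-1) - (1 - (1/2)^(m-1)) * Ptol / γ 1`, and in particular
`P 1 ≤ Pt/2^(m-1)`. -/
theorem dl_noma_max_power_strongest_user
    (m : ℕ) (hm : 2 ≤ m) (P γ : ℕ → ℝ) (Pt Ptol : ℝ)
    (hP : ∀ i ∈ Finset.Icc 1 m, 0 ≤ P i)
    (hsum : ∑ i ∈ Finset.Icc 1 m, P i ≤ Pt)
    (hγ : ∀ i ∈ Finset.Icc 1 m, 0 < γ i)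
    (hγ1 : ∀ i ∈ Finset.Icc 1 m, γ i ≤ γ 1)
    (hPtol : 0 ≤ Ptol)
    (hSIC : ∀ i ∈ Finset.Icc 2 m,
      (P i - ∑ j ∈ Finset.Icc 1 (i - 1), P j) * γ (i - 1) ≥ Ptol) :
    P 1 ≤ Pt / 2 ^ (m - 1) - (1 - (1 / 2 : ℝ) ^ (m - 1)) * Ptol / γ 1 ∧
    P 1 ≤ Pt / 2 ^ (m - 1) := by
  have hγ1pos : 0 < γ 1 := hγ 1 (by simp [Finset.mem_Icc]; omega)
  set t : ℝ := Ptol / γ 1 with ht_def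
  have ht : 0 ≤ t := div_nonneg hPtol hγ1pos.le
  have key : ∀ k, 1 ≤ k → k ≤ m →
      (2:ℝ)^(k-1) * P 1 + ((2:ℝ)^(k-1) - 1) * t ≤ ∑ i ∈ Finset.Icc 1 k, P i := by
    intro k hk1
    induction k, hk1 using Nat.le_induction with
    | base => intro _; simp
    | succ k hk ih =>
      intro hkm
      have ihk := ih (by omega)
      have hγk : 0 < γ k := hγ k (by simp [Finset.mem_Icc]; omega)
      have hγk1 : γ k ≤ γ 1 := hγ1 k (by simp [Finset.mem_Icc]; omega)
      have hs := hSIC (k+1) (by simp [Finset.mem_Icc]; omega)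
      simp only [Nat.add_sub_cancel] at hs
      have h1 : Ptol / γ k ≤ P (k+1) - ∑ j ∈ Finset.Icc 1 k, P j :=
        (div_le_iff₀ hγk).mpr (by linarith)
      have h2 : t ≤ Ptol / γ k := div_le_div_of_nonneg_left hPtol hγk hγk1
      have hstep : (∑ j ∈ Finset.Icc 1 k, P j) + t ≤ P (k+1) := by linarith
      rw [Finset.sum_Icc_succ_top (by omega : 1 ≤ k+1)]
      have hpow : (2:ℝ)^(k+1-1) = 2 * 2^(k-1) := by
        rw [← pow_succ']; congr 1; omega
      rw [hpow]
      nlinarith [ihk, hstep]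
  have keym := key m (by omega) le_rfl
  have key' : (2:ℝ)^(m-1) * P 1 + ((2:ℝ)^(m-1) - 1) * t ≤ Pt := le_trans keym hsum
  have ha : (0:ℝ) < 2^(m-1) := by positivity
  have h1a : (1:ℝ) ≤ 2^(m-1) := one_le_pow₀ (by norm_num)
  constructor
  · have h12 : ((1:ℝ)/2)^(m-1) = 1/2^(m-1) := by rw [div_pow, one_pow]
    have heq : Pt / 2^(m-1) - (1 - (1/2:ℝ)^(m-1)) * Ptol / γ 1
        = (Pt - ((2:ℝ)^(m-1) - 1) * t) / 2^(m-1) := by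
      rw [h12, mul_div_assoc, ← ht_def]
      field_simp
    rw [heq, le_div_iff₀ ha]
    nlinarith [key']
  · rw [le_div_iff₀ ha]
    nlinarith [key', mul_nonneg (sub_nonneg.mpr h1a) ht]
end

section
/- Let m ≥ 2, let P_1,…,P_m ≥ 0 be transmit powers with Σ_{i=1}^m P_i ≤ P_t, let γ_1,…,γ_m > 0, and let P_tol ≥ 0. If the downlink SIC power constraints (P_i − Σ_{j=1}^{i−1} P_j)·γ_{i−1} ≥ P_tol hold for every i = 2,…,m, then for every index k with 1 ≤ k ≤ m−1 the power of the k-th strongest user satisfies P_k ≤ P_t/2^{m−k}. -/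
/-- In an m-user downlink NOMA cluster satisfying the SIC power constraints,
the power of the k-th strongest user (1 ≤ k ≤ m-1) satisfies `P k ≤ Pt / 2^(m-k)`. -/
theorem dl_noma_power_bound_kth_user
    (m : ℕ) (hm : 2 ≤ m) (P γ : ℕ → ℝ) (Pt Ptol : ℝ)
    (hP : ∀ i ∈ Finset.Icc 1 m, 0 ≤ P i)
    (hsum : ∑ i ∈ Finset.Icc 1 m, P i ≤ Pt)
    (hγ : ∀ i ∈ Finset.Icc 1 m, 0 < γ i)
    (hPtol : 0 ≤ Ptol)
    (hSIC : ∀ i ∈ Finset.Icc 2 m,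
      (P i - ∑ j ∈ Finset.Icc 1 (i - 1), P j) * γ (i - 1) ≥ Ptol) :
    ∀ k : ℕ, 1 ≤ k → k ≤ m - 1 → P k ≤ Pt / 2 ^ (m - k) := by
  intro k hk1 hkm
  set S : ℕ → ℝ := fun n => ∑ j ∈ Finset.Icc 1 n, P j with hS
  -- key step: doubling
  have hstep : ∀ i : ℕ, 1 ≤ i → i + 1 ≤ m → 2 * S i ≤ S (i + 1) := by
    intro i hi1 him
    have hmem : i + 1 ∈ Finset.Icc 2 m := by
      simp [Finset.mem_Icc]; omega
    have h := hSIC (i + 1) hmem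
    have hγi : 0 < γ i := hγ i (by simp [Finset.mem_Icc]; omega)
    have hsimp : i + 1 - 1 = i := by omega
    rw [hsimp] at h
    have hnn : 0 ≤ P (i + 1) - S i := by
      by_contra hneg
      push_neg at hneg
      have : (P (i + 1) - S i) * γ i < 0 := mul_neg_of_neg_of_pos hneg hγi
      linarith
    have hsplit : S (i + 1) = S i + P (i + 1) := by
      rw [hS]
      simp only
      rw [Finset.sum_Icc_succ_top (by omega : 1 ≤ i + 1)]
    linarith
  -- iterate
  have hiter : ∀ d : ℕ, k + d ≤ m → 2 ^ d * S k ≤ S (k + d) := by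
    intro d
    induction d with
    | zero => intro _; simp
    | succ n ih =>
      intro hle
      have h1 : k + n ≤ m := by omega
      have h2 := ih h1
      have h3 := hstep (k + n) (by omega) (by omega)
      have hSknonneg : 0 ≤ S k := by
        apply Finset.sum_nonneg
        intro j hj
        exact hP j (by simp [Finset.mem_Icc] at hj ⊢; omega)
      calc 2 ^ (n+1) * S k = 2 * (2 ^ n * S k) := by ring
        _ ≤ 2 * S (k + n) := by nlinarith
        _ ≤ S (k + n + 1) := h3
        _ = S (k + (n + 1)) := by ring_nf
  have hd : k + (m - k) = m := by omega
  have hfin : 2 ^ (m - k) * S k ≤ S m := by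
    have := hiter (m - k) (by omega)
    rwa [hd] at this
  have hPkS : P k ≤ S k := by
    apply Finset.single_le_sum (f := P)
    · intro j hj
      exact hP j (by simp [Finset.mem_Icc] at hj ⊢; omega)
    · simp [Finset.mem_Icc]; omega
  have hpow : (0:ℝ) < 2 ^ (m - k) := by positivity
  rw [le_div_iff₀ hpow]
  calc P k * 2 ^ (m - k) ≤ S k * 2 ^ (m - k) := by nlinarith
    _ = 2 ^ (m - k) * S k := by ring
    _ ≤ S m := hfin
    _ ≤ Pt := hsum
end

section
/- Let m ≥ 1, let γ_1,…,γ_m > 0, let ω > 0, and let P_t′ > 0 be the per-user transmit power budget. Then full-power transmission is optimal for uplink NOMA: for every power vector Q_1,…,Q_m with 0 ≤ Q_i ≤ P_t′ for all i, Σ_{i=1}^m log₂(1 + Q_i γ_i / (Σ_{j=i+1}^{m} Q_j γ_j + ω)) ≤ Σ_{i=1}^m log₂(1 + P_t′ γ_i / (Σ_{j=i+1}^{m} P_t′ γ_j + ω)). -/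
private lemma tele_sum (f : ℕ → ℝ) (m : ℕ) :
    ∑ i ∈ Finset.Icc 1 m, (f i - f (i + 1)) = f 1 - f (m + 1) := by
  induction m with
  | zero => simp
  | succ n ih =>
    rw [Finset.sum_Icc_succ_top (Nat.le_add_left 1 n), ih]
    ring


/-- Full-power transmission maximizes the uplink NOMA sum throughput. -/
theorem ul_noma_full_power_optimal
    (m : ℕ) (hm : 1 ≤ m) (γ : ℕ → ℝ) (ω Pt' : ℝ)
    (hγ : ∀ i ∈ Finset.Icc 1 m, 0 < γ i)
    (hω : 0 < ω) (hPt : 0 < Pt')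
    (Q : ℕ → ℝ) (hQ : ∀ i ∈ Finset.Icc 1 m, 0 ≤ Q i ∧ Q i ≤ Pt') :
    ∑ i ∈ Finset.Icc 1 m,
        Real.logb 2 (1 + Q i * γ i / (∑ j ∈ Finset.Icc (i + 1) m, Q j * γ j + ω))
      ≤ ∑ i ∈ Finset.Icc 1 m,
        Real.logb 2 (1 + Pt' * γ i / (∑ j ∈ Finset.Icc (i + 1) m, Pt' * γ j + ω)) := by
  -- T R i = partial interference + noise
  set T : (ℕ → ℝ) → ℕ → ℝ := fun R i => (∑ j ∈ Finset.Icc i m, R j * γ j) + ω with hT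
  have hpos : ∀ R : ℕ → ℝ, (∀ i ∈ Finset.Icc 1 m, 0 ≤ R i) → ∀ i, 1 ≤ i → 0 < T R i := by
    intro R hR i hi
    have hsum : 0 ≤ ∑ j ∈ Finset.Icc i m, R j * γ j := by
      apply Finset.sum_nonneg
      intro j hj
      have hj' : j ∈ Finset.Icc 1 m := by
        simp only [Finset.mem_Icc] at hj ⊢
        exact ⟨le_trans hi hj.1, hj.2⟩
      exact mul_nonneg (hR j hj') (hγ j hj').le
    simpa [hT] using add_pos_of_nonneg_of_pos hsum hω
  have hQnn : ∀ i ∈ Finset.Icc 1 m, 0 ≤ Q i := fun i hi => (hQ i hi).1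
  have hPnn : ∀ i ∈ Finset.Icc 1 m, 0 ≤ (fun _ : ℕ => Pt') i := fun i _ => hPt.le
  -- rewrite each summand as logb (T R i) - logb (T R (i+1))
  have key : ∀ R : ℕ → ℝ, (∀ i ∈ Finset.Icc 1 m, 0 ≤ R i) →
      ∑ i ∈ Finset.Icc 1 m,
        Real.logb 2 (1 + R i * γ i / (∑ j ∈ Finset.Icc (i + 1) m, R j * γ j + ω))
        = Real.logb 2 (T R 1) - Real.logb 2 (T R (m + 1)) := by
    intro R hR
    rw [← tele_sum (fun i => Real.logb 2 (T R i)) m]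
    apply Finset.sum_congr rfl
    intro i hi
    have hi' := Finset.mem_Icc.mp hi
    have h1 : T R i = R i * γ i + T R (i + 1) := by
      simp only [hT]
      rw [Finset.Icc_eq_cons_Ioc hi'.2, Finset.sum_cons, ← Finset.Icc_add_one_left_eq_Ioc]
      ring
    have hp2 : 0 < T R (i + 1) := hpos R hR (i + 1) (le_trans hi'.1 (Nat.le_succ i))
    have hp1 : 0 < T R i := hpos R hR i hi'.1
    have harg : 1 + R i * γ i / (∑ j ∈ Finset.Icc (i + 1) m, R j * γ j + ω)
        = T R i / T R (i + 1) := by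
      rw [h1]
      have : (∑ j ∈ Finset.Icc (i + 1) m, R j * γ j + ω) = T R (i + 1) := by
        simp [hT]
      rw [this]
      field_simp
      ring
    rw [harg, Real.logb_div hp1.ne' hp2.ne']
  rw [key Q hQnn, key (fun _ => Pt') hPnn]
  have hend : T Q (m + 1) = T (fun _ => Pt') (m + 1) := by
    simp [hT, Finset.Icc_eq_empty_of_lt (Nat.lt_succ_self m)]
  rw [hend]
  have hle : T Q 1 ≤ T (fun _ => Pt') 1 := by
    simp only [hT]
    have : ∀ j ∈ Finset.Icc 1 m, Q j * γ j ≤ Pt' * γ j := fun j hj =>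
      mul_le_mul_of_nonneg_right (hQ j hj).2 (hγ j hj).le
    linarith [Finset.sum_le_sum this]
  have hQ1 : 0 < T Q 1 := hpos Q hQnn 1 le_rfl
  have := Real.logb_le_logb_of_le (by norm_num : (1:ℝ) < 2) hQ1 hle
  linarith
end

section
/- Let m ≥ 2, let γ_1,…,γ_m > 0, let ω > 0, let P_t′ > 0, and let φ > 0 (where φ = 2^{R′_{m−1}/(ωB)} − 1 encodes the minimum-rate requirement of user m−1). Define P_i = P_t′ for i = 1,…,m−1 and P_m = P_t′γ_{m−1}/(φ·γ_m) − ω/γ_m, and assume 0 ≤ P_m ≤ P_t′. Then: (a) user (m−1)'s rate constraint holds with equality, i.e., P_{m−1}γ_{m−1} = φ·(P_m γ_m + ω); and (b) for every Q_1,…,Q_m with 0 ≤ Q_i ≤ P_t′ for all i and Q_{m−1}γ_{m−1} ≥ φ·(Q_m γ_m + ω), the sum throughput satisfies Σ_{i=1}^m log₂(1 + Q_i γ_i / (Σ_{j=i+1}^{m} Q_j γ_j + ω)) ≤ Σ_{i=1}^m log₂(1 + P_i γ_i / (Σ_{j=i+1}^{m} P_j γ_j + ω)). -/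
lemma ul_noma_telescope (m : ℕ) (γ Q : ℕ → ℝ) (ω : ℝ) (hω : 0 < ω)
    (hQ : ∀ i ∈ Finset.Icc 1 m, 0 ≤ Q i * γ i) :
    ∑ i ∈ Finset.Icc 1 m,
        Real.logb 2 (1 + Q i * γ i / (∑ j ∈ Finset.Icc (i + 1) m, Q j * γ j + ω))
      = Real.logb 2 (∑ j ∈ Finset.Icc 1 m, Q j * γ j + ω) - Real.logb 2 ω := by
  have hTnonneg : ∀ i, 1 ≤ i → (0:ℝ) ≤ ∑ j ∈ Finset.Icc i m, Q j * γ j := by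
    intro i hi
    apply Finset.sum_nonneg
    intro j hj
    exact hQ j (Finset.mem_Icc.mpr ⟨le_trans hi (Finset.mem_Icc.mp hj).1, (Finset.mem_Icc.mp hj).2⟩)
  have hTpos : ∀ i, 1 ≤ i → (0:ℝ) < ∑ j ∈ Finset.Icc i m, Q j * γ j + ω :=
    fun i hi => by linarith [hTnonneg i hi]
  have key : ∀ i ∈ Finset.Icc 1 m,
      Real.logb 2 (1 + Q i * γ i / (∑ j ∈ Finset.Icc (i + 1) m, Q j * γ j + ω))
        = Real.logb 2 (∑ j ∈ Finset.Icc i m, Q j * γ j + ω)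
          - Real.logb 2 (∑ j ∈ Finset.Icc (i + 1) m, Q j * γ j + ω) := by
    intro i hi
    obtain ⟨hi1, him⟩ := Finset.mem_Icc.mp hi
    have hsplit : Finset.Icc i m = insert i (Finset.Icc (i + 1) m) := by
      ext x; simp only [Finset.mem_Icc, Finset.mem_insert]; omega
    have hTi : ∑ j ∈ Finset.Icc i m, Q j * γ j
        = Q i * γ i + ∑ j ∈ Finset.Icc (i + 1) m, Q j * γ j := by
      rw [hsplit, Finset.sum_insert (by simp)]
    have h1 : (0:ℝ) < ∑ j ∈ Finset.Icc (i + 1) m, Q j * γ j + ω := hTpos (i + 1) (by omega)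
    have h0 : (0:ℝ) < ∑ j ∈ Finset.Icc i m, Q j * γ j + ω := hTpos i hi1
    have h2 : 1 + Q i * γ i / (∑ j ∈ Finset.Icc (i + 1) m, Q j * γ j + ω)
        = (∑ j ∈ Finset.Icc i m, Q j * γ j + ω)
          / (∑ j ∈ Finset.Icc (i + 1) m, Q j * γ j + ω) := by
      field_simp; linarith
    rw [h2, Real.logb_div (ne_of_gt h0) (ne_of_gt h1)]
  rw [Finset.sum_congr rfl key]
  have hrange : ∑ i ∈ Finset.Icc 1 m,
      (Real.logb 2 (∑ j ∈ Finset.Icc i m, Q j * γ j + ω)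
        - Real.logb 2 (∑ j ∈ Finset.Icc (i + 1) m, Q j * γ j + ω))
      = ∑ i ∈ Finset.range m,
      ((fun k => Real.logb 2 (∑ j ∈ Finset.Icc (1 + k) m, Q j * γ j + ω)) i
        - (fun k => Real.logb 2 (∑ j ∈ Finset.Icc (1 + k) m, Q j * γ j + ω)) (i + 1)) := by
    rw [← Finset.Ico_add_one_right_eq_Icc, Finset.sum_Ico_eq_sum_range]
    simp only [Nat.add_sub_cancel]
    apply Finset.sum_congr rfl
    intro i _
    have : 1 + i + 1 = 1 + (i + 1) := by omega
    rw [this]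
  rw [hrange, Finset.sum_range_sub']
  have hTend : ∑ j ∈ Finset.Icc (1 + m) m, Q j * γ j = 0 := by
    rw [Finset.Icc_eq_empty (by omega), Finset.sum_empty]
  simp [hTend]

/-- Uplink NOMA optimal power allocation when the minimum-rate constraint of
user m-1 is binding: users 1..m-1 transmit at full power and
`P m = Pt'·γ_{m-1}/(φ·γ_m) - ω/γ_m`.  Then (a) user (m-1)'s rate constraint
holds with equality, and (b) this allocation maximizes the sum throughput among
all feasible allocations satisfying that constraint. -/
theorem ul_noma_opt_power_rate_binding
    (m : ℕ) (hm : 2 ≤ m) (γ : ℕ → ℝ) (ω Pt' φ : ℝ)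
    (hγ : ∀ i ∈ Finset.Icc 1 m, 0 < γ i)
    (hω : 0 < ω) (hPt : 0 < Pt') (hφ : 0 < φ)
    (P : ℕ → ℝ)
    (hPdef : ∀ i ∈ Finset.Icc 1 (m - 1), P i = Pt')
    (hPm : P m = Pt' * γ (m - 1) / (φ * γ m) - ω / γ m)
    (hPm0 : 0 ≤ P m) (hPmB : P m ≤ Pt') :
    P (m - 1) * γ (m - 1) = φ * (P m * γ m + ω) ∧
    ∀ Q : ℕ → ℝ, (∀ i ∈ Finset.Icc 1 m, 0 ≤ Q i ∧ Q i ≤ Pt') →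
      Q (m - 1) * γ (m - 1) ≥ φ * (Q m * γ m + ω) →
      ∑ i ∈ Finset.Icc 1 m,
          Real.logb 2 (1 + Q i * γ i / (∑ j ∈ Finset.Icc (i + 1) m, Q j * γ j + ω))
        ≤ ∑ i ∈ Finset.Icc 1 m,
          Real.logb 2 (1 + P i * γ i / (∑ j ∈ Finset.Icc (i + 1) m, P j * γ j + ω)) := by
  have hm1 : (m - 1) ∈ Finset.Icc 1 (m - 1) := Finset.mem_Icc.mpr ⟨by omega, le_refl _⟩
  have hm1m : (m - 1) ∈ Finset.Icc 1 m := Finset.mem_Icc.mpr ⟨by omega, by omega⟩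
  have hmm : m ∈ Finset.Icc 1 m := Finset.mem_Icc.mpr ⟨by omega, le_refl _⟩
  have hγm : 0 < γ m := hγ m hmm
  have hγm1 : 0 < γ (m - 1) := hγ (m - 1) hm1m
  have hPmγ : P m * γ m = Pt' * γ (m - 1) / φ - ω := by
    rw [hPm]; field_simp
  have ha : P (m - 1) * γ (m - 1) = φ * (P m * γ m + ω) := by
    rw [hPdef (m - 1) hm1, hPmγ]; field_simp; ring
  refine ⟨ha, ?_⟩
  intro Q hQ hQc
  have hQn : ∀ i ∈ Finset.Icc 1 m, 0 ≤ Q i * γ i := fun i hi =>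
    mul_nonneg (hQ i hi).1 (hγ i hi).le
  have hPn : ∀ i ∈ Finset.Icc 1 m, 0 ≤ P i * γ i := by
    intro i hi
    rcases eq_or_ne i m with rfl | hne
    · exact mul_nonneg hPm0 hγm.le
    · have hi' : i ∈ Finset.Icc 1 (m - 1) := by
        obtain ⟨h1, h2⟩ := Finset.mem_Icc.mp hi
        exact Finset.mem_Icc.mpr ⟨h1, by omega⟩
      rw [hPdef i hi']; exact mul_nonneg hPt.le (hγ i hi).le
  rw [ul_noma_telescope m γ Q ω hω hQn, ul_noma_telescope m γ P ω hω hPn]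
  have hsum : ∑ j ∈ Finset.Icc 1 m, Q j * γ j ≤ ∑ j ∈ Finset.Icc 1 m, P j * γ j := by
    apply Finset.sum_le_sum
    intro i hi
    rcases eq_or_ne i m with rfl | hne
    · have h1 : Q (i - 1) ≤ Pt' := (hQ (i - 1) hm1m).2
      have h2 : φ * (Q i * γ i + ω) ≤ Pt' * γ (i - 1) :=
        le_trans hQc (mul_le_mul_of_nonneg_right h1 hγm1.le)
      rw [hPmγ]
      rw [div_sub' (ne_of_gt hφ), le_div_iff₀ hφ]
      nlinarith
    · have hi' : i ∈ Finset.Icc 1 (m - 1) := by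
        obtain ⟨h1, h2⟩ := Finset.mem_Icc.mp hi
        exact Finset.mem_Icc.mpr ⟨h1, by omega⟩
      rw [hPdef i hi']
      exact mul_le_mul_of_nonneg_right (hQ i hi).2 (hγ i hi).le
  have hpos : (0:ℝ) < ∑ j ∈ Finset.Icc 1 m, Q j * γ j + ω := by
    have := Finset.sum_nonneg hQn; linarith
  have hlog := (Real.logb_le_logb (b := 2) (by norm_num) hpos
    (by linarith : (0:ℝ) < ∑ j ∈ Finset.Icc 1 m, P j * γ j + ω)).mpr (by linarith)
  linarith
end

section
/- Let m ≥ 2, let γ_1,…,γ_m > 0, let ω > 0, let P_t′ > 0, and let P_tol ≥ 0 be the SIC detection threshold. Define P_i = P_t′ for i = 1,…,m−1 and P_m = (P_t′γ_{m−1} − P_tol)/γ_m, and assume 0 ≤ P_m ≤ P_t′. Then: (a) the SIC constraint between the two weakest users holds with equality, i.e., P_{m−1}γ_{m−1} − P_m γ_m = P_tol; and (b) for every Q_1,…,Q_m with 0 ≤ Q_i ≤ P_t′ for all i and Q_{m−1}γ_{m−1} − Q_m γ_m ≥ P_tol, the sum throughput satisfies Σ_{i=1}^m log₂(1 + Q_i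 γ_i / (Σ_{j=i+1}^{m} Q_j γ_j + ω)) ≤ Σ_{i=1}^m log₂(1 + P_i γ_i / (Σ_{j=i+1}^{m} P_j γ_j + ω)). -/
private lemma noma_telescope (m : ℕ) (γ Q : ℕ → ℝ) (ω : ℝ) (hω : 0 < ω)
    (hQ : ∀ j ∈ Finset.Icc 1 m, 0 ≤ Q j * γ j) :
    ∑ i ∈ Finset.Icc 1 m,
        Real.logb 2 (1 + Q i * γ i / (∑ j ∈ Finset.Icc (i + 1) m, Q j * γ j + ω))
      = Real.logb 2 (∑ j ∈ Finset.Icc 1 m, Q j * γ j + ω) - Real.logb 2 ω := by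
  set f : ℕ → ℝ := fun i => Real.logb 2 (∑ j ∈ Finset.Icc i m, Q j * γ j + ω) with hf
  have hSnn : ∀ i, 1 ≤ i → 0 ≤ ∑ j ∈ Finset.Icc i m, Q j * γ j := by
    intro i hi
    refine Finset.sum_nonneg fun j hj => hQ j ?_
    simp only [Finset.mem_Icc] at hj ⊢
    exact ⟨le_trans hi hj.1, hj.2⟩
  have hterm : ∀ i ∈ Finset.Icc 1 m,
      Real.logb 2 (1 + Q i * γ i / (∑ j ∈ Finset.Icc (i + 1) m, Q j * γ j + ω))
        = f i - f (i + 1) := by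
    intro i hi
    simp only [Finset.mem_Icc] at hi
    have hsplit : ∑ j ∈ Finset.Icc i m, Q j * γ j
        = Q i * γ i + ∑ j ∈ Finset.Icc (i + 1) m, Q j * γ j := by
      rw [Finset.Icc_add_one_left_eq_Ioc, Finset.Icc_eq_cons_Ioc hi.2, Finset.sum_cons]
    have h1 : 0 < ∑ j ∈ Finset.Icc (i + 1) m, Q j * γ j + ω := by
      have := hSnn (i + 1) (by omega); linarith
    have h0 : 0 < ∑ j ∈ Finset.Icc i m, Q j * γ j + ω := by
      have := hSnn i hi.1; linarith
    have heq : 1 + Q i * γ i / (∑ j ∈ Finset.Icc (i + 1) m, Q j * γ j + ω)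
        = (∑ j ∈ Finset.Icc i m, Q j * γ j + ω)
          / (∑ j ∈ Finset.Icc (i + 1) m, Q j * γ j + ω) := by
      rw [hsplit]; field_simp; ring
    rw [heq, Real.logb_div (ne_of_gt h0) (ne_of_gt h1)]
  rw [Finset.sum_congr rfl hterm]
  have hIcc : Finset.Icc 1 m = Finset.Ico 1 (m + 1) := by rw [Finset.Ico_add_one_right_eq_Icc]
  rw [hIcc, Finset.sum_Ico_eq_sum_range]
  simp only [Nat.add_sub_cancel]
  have h2 : ∀ x ∈ Finset.range m,
      f (1 + x) - f (1 + x + 1) = f (x + 1) - f (x + 1 + 1) := by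
    intro x _
    rw [show 1 + x = x + 1 by omega]
  rw [Finset.sum_congr rfl h2, Finset.sum_range_sub' (fun i => f (i + 1)) m]
  have hemp : Finset.Icc (m + 1) m = ∅ := by
    rw [Finset.Icc_eq_empty_iff]; omega
  simp [hf, hemp, ← hIcc]

/-- Uplink NOMA optimal power allocation when the SIC constraint between the
two weakest users is binding: users 1..m-1 transmit at full power and
`P m = (Pt'·γ_{m-1} - Ptol)/γ_m`.  Then (a) the SIC constraint holds with
equality, and (b) this allocation maximizes the sum throughput among all
feasible allocations satisfying that constraint. -/
theorem ul_noma_opt_power_sic_binding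
    (m : ℕ) (hm : 2 ≤ m) (γ : ℕ → ℝ) (ω Pt' Ptol : ℝ)
    (hγ : ∀ i ∈ Finset.Icc 1 m, 0 < γ i)
    (hω : 0 < ω) (hPt : 0 < Pt') (hPtol : 0 ≤ Ptol)
    (P : ℕ → ℝ)
    (hPdef : ∀ i ∈ Finset.Icc 1 (m - 1), P i = Pt')
    (hPm : P m = (Pt' * γ (m - 1) - Ptol) / γ m)
    (hPm0 : 0 ≤ P m) (hPmB : P m ≤ Pt') :
    P (m - 1) * γ (m - 1) - P m * γ m = Ptol ∧
    ∀ Q : ℕ → ℝ, (∀ i ∈ Finset.Icc 1 m, 0 ≤ Q i ∧ Q i ≤ Pt') →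
      Q (m - 1) * γ (m - 1) - Q m * γ m ≥ Ptol →
      ∑ i ∈ Finset.Icc 1 m,
          Real.logb 2 (1 + Q i * γ i / (∑ j ∈ Finset.Icc (i + 1) m, Q j * γ j + ω))
        ≤ ∑ i ∈ Finset.Icc 1 m,
          Real.logb 2 (1 + P i * γ i / (∑ j ∈ Finset.Icc (i + 1) m, P j * γ j + ω)) := by
  have hm1 : m - 1 ∈ Finset.Icc 1 (m - 1) := by simp; omega
  have hm1m : m - 1 ∈ Finset.Icc 1 m := by simp; omega
  have hmm : m ∈ Finset.Icc 1 m := by simp; omega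
  have hγm : 0 < γ m := hγ m hmm
  have hγm1 : 0 < γ (m - 1) := hγ _ hm1m
  have hPm1 : P (m - 1) = Pt' := hPdef _ hm1
  have hPmγ : P m * γ m = Pt' * γ (m - 1) - Ptol := by
    rw [hPm, div_mul_cancel₀ _ (ne_of_gt hγm)]
  have ha : P (m - 1) * γ (m - 1) - P m * γ m = Ptol := by
    rw [hPm1, hPmγ]; ring
  refine ⟨ha, fun Q hQ hsic => ?_⟩
  have hPnn : ∀ j ∈ Finset.Icc 1 m, 0 ≤ P j * γ j := by
    intro j hj
    rcases eq_or_ne j m with hjm | hne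
    · rw [hjm]; exact mul_nonneg hPm0 (le_of_lt hγm)
    · have hj' : j ∈ Finset.Icc 1 (m - 1) := by
        simp only [Finset.mem_Icc] at hj ⊢; omega
      rw [hPdef j hj']
      exact mul_nonneg (le_of_lt hPt) (le_of_lt (hγ j hj))
  have hQnn : ∀ j ∈ Finset.Icc 1 m, 0 ≤ Q j * γ j := fun j hj =>
    mul_nonneg (hQ j hj).1 (le_of_lt (hγ j hj))
  rw [noma_telescope m γ Q ω hω hQnn, noma_telescope m γ P ω hω hPnn]
  have hsum : ∑ j ∈ Finset.Icc 1 m, Q j * γ j ≤ ∑ j ∈ Finset.Icc 1 m, P j * γ j := by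
    refine Finset.sum_le_sum fun j hj => ?_
    rcases eq_or_ne j m with hjm | hne
    · rw [hjm]
      have hQm1 : Q (m - 1) ≤ Pt' := (hQ _ hm1m).2
      have : Q (m - 1) * γ (m - 1) ≤ Pt' * γ (m - 1) :=
        mul_le_mul_of_nonneg_right hQm1 (le_of_lt hγm1)
      rw [hPmγ]; linarith
    · have hj' : j ∈ Finset.Icc 1 (m - 1) := by
        simp only [Finset.mem_Icc] at hj ⊢; omega
      rw [hPdef j hj']
      exact mul_le_mul_of_nonneg_right (hQ j hj).2 (le_of_lt (hγ j hj))
  have hpos : 0 < ∑ j ∈ Finset.Icc 1 m, Q j * γ j + ω := by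
    have := Finset.sum_nonneg hQnn; linarith
  have hlog := Real.logb_le_logb_of_le (by norm_num : (1:ℝ) < 2) hpos
    (by linarith : ∑ j ∈ Finset.Icc 1 m, Q j * γ j + ω ≤ ∑ j ∈ Finset.Icc 1 m, P j * γ j + ω)
  linarith [hlog]
end

section
/- Let γ_1 > γ_2 > 0, ω > 0, and P_t > 0. Define g(x) = log₂(1 + x·γ_1/ω) + log₂(1 + (P_t − x)·γ_2/(x·γ_2 + ω)) for x ∈ [0, P_t], i.e., the 2-user downlink NOMA sum throughput when the stronger user gets power x and the weaker user gets power P_t − x. Then g is strictly increasing on [0, P_t]: for all 0 ≤ x < y ≤ P_t, g(x) < g(y). -/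
/-- The 2-user downlink NOMA sum throughput, as a function of the power `x`
given to the stronger user (with the weaker user getting `Pt - x`), is strictly
increasing on `[0, Pt]`. -/
theorem dl_noma_two_user_throughput_strict_mono
    (γ1 γ2 ω Pt : ℝ) (h12 : γ2 < γ1) (h2 : 0 < γ2) (hω : 0 < ω) (hPt : 0 < Pt)
    (g : ℝ → ℝ)
    (hg : ∀ x, g x = Real.logb 2 (1 + x * γ1 / ω)
        + Real.logb 2 (1 + (Pt - x) * γ2 / (x * γ2 + ω))) :
    ∀ x y : ℝ, 0 ≤ x → x < y → y ≤ Pt → g x < g y := by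
  intro x y hx hxy hyP
  have h1 : 0 < γ1 := lt_trans h2 h12
  have hy : 0 ≤ y := le_of_lt (lt_of_le_of_lt hx hxy)
  have hBx : 0 < x * γ2 + ω := by positivity
  have hBy : 0 < y * γ2 + ω := by positivity
  have hAx : 0 < ω + x * γ1 := by positivity
  have hAy : 0 < ω + y * γ1 := by positivity
  have hC : 0 < ω + Pt * γ2 := by positivity
  have e1 : ∀ z : ℝ, 1 + z * γ1 / ω = (ω + z * γ1) / ω := by
    intro z; field_simp
  have e2 : ∀ z : ℝ, 0 ≤ z → 1 + (Pt - z) * γ2 / (z * γ2 + ω)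
      = (ω + Pt * γ2) / (z * γ2 + ω) := by
    intro z hz
    have hz' : z * γ2 + ω ≠ 0 := by positivity
    field_simp
    ring
  rw [hg x, hg y, e1 x, e1 y, e2 x hx, e2 y hy,
    ← Real.logb_mul (by positivity) (by positivity),
    ← Real.logb_mul (by positivity) (by positivity)]
  apply Real.logb_lt_logb one_lt_two (by positivity)
  rw [div_mul_div_comm, div_mul_div_comm, div_lt_div_iff₀ (by positivity) (by positivity)]
  nlinarith [mul_pos hω (mul_pos hC (mul_pos (sub_pos.mpr hxy) (sub_pos.mpr h12)))]
end

section
/- Let γ_1 > γ_2 > 0, ω > 0, P_t > 0, P_tol ≥ 0, and φ_2 > 1 (where φ_2 = 2^{R_2/(ωB)} encodes the weak user's minimum rate). Define P_1 = P_t/φ_2 − ω(φ_2 − 1)/(φ_2γ_2) and P_2 = P_t − P_1, and assume P_1 ≥ 0 and (P_2 − P_1)·γ_1 ≥ P_tol. Then: (a) the weak user's rate constraint holds with equality, P_2γ_2 = (φ_2 − 1)(P_1γ_2 + ω); and (b) for all Q_1, Q_2 ≥ 0 with Q_1 + Q_2 ≤ P_t, Q_2γ_2 ≥ (φ_2 −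 1)(Q_1γ_2 + ω), and (Q_2 − Q_1)·γ_1 ≥ P_tol, the sum throughput satisfies log₂(1 + Q_1γ_1/ω) + log₂(1 + Q_2γ_2/(Q_1γ_2 + ω)) ≤ log₂(1 + P_1γ_1/ω) + log₂(1 + P_2γ_2/(P_1γ_2 + ω)). -/
/-- 2-user downlink NOMA, case where the weak user's rate constraint is
binding: with `P1 = Pt/φ2 - ω(φ2-1)/(φ2 γ2)` and `P2 = Pt - P1`,
(a) the weak user's rate constraint holds with equality, and (b) this
allocation maximizes the sum throughput among all feasible allocations. -/
theorem dl_noma_two_user_opt_rate_binding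
    (γ1 γ2 ω Pt Ptol φ2 : ℝ) (h12 : γ2 < γ1) (h2 : 0 < γ2) (hω : 0 < ω)
    (hPt : 0 < Pt) (hPtol : 0 ≤ Ptol) (hφ : 1 < φ2)
    (P1 P2 : ℝ)
    (hP1 : P1 = Pt / φ2 - ω * (φ2 - 1) / (φ2 * γ2))
    (hP2 : P2 = Pt - P1)
    (hP1nn : 0 ≤ P1)
    (hSIC : (P2 - P1) * γ1 ≥ Ptol) :
    P2 * γ2 = (φ2 - 1) * (P1 * γ2 + ω) ∧
    ∀ Q1 Q2 : ℝ, 0 ≤ Q1 → 0 ≤ Q2 → Q1 + Q2 ≤ Pt →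
      Q2 * γ2 ≥ (φ2 - 1) * (Q1 * γ2 + ω) → (Q2 - Q1) * γ1 ≥ Ptol →
      Real.logb 2 (1 + Q1 * γ1 / ω) + Real.logb 2 (1 + Q2 * γ2 / (Q1 * γ2 + ω))
        ≤ Real.logb 2 (1 + P1 * γ1 / ω) + Real.logb 2 (1 + P2 * γ2 / (P1 * γ2 + ω)) := by
  have hφ0 : 0 < φ2 := by linarith
  have hγ1 : 0 < γ1 := lt_trans h2 h12
  have hP1' : P1 * (φ2 * γ2) = Pt * γ2 - ω * (φ2 - 1) := by
    rw [hP1]; field_simp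
  have hb2 : (1:ℝ) < 2 := one_lt_two
  constructor
  · rw [hP2]
    nlinarith [hP1']
  · intro Q1 Q2 hQ1 hQ2 hsum hrate _
    have hdenQ : 0 < Q1 * γ2 + ω := by positivity
    have hdenP : 0 < P1 * γ2 + ω := by positivity
    have hQ1P1 : Q1 ≤ P1 := by
      have h1 : Q2 * γ2 ≤ (Pt - Q1) * γ2 := by nlinarith
      nlinarith [mul_pos hφ0 h2]
    have hA : (1:ℝ) + Q1 * γ1 / ω = (ω + Q1 * γ1) / ω := by field_simp
    have hB : (1:ℝ) + Q2 * γ2 / (Q1 * γ2 + ω) = (Q1 * γ2 + ω + Q2 * γ2) / (Q1 * γ2 + ω) := by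
      field_simp
    have hC : (1:ℝ) + P1 * γ1 / ω = (ω + P1 * γ1) / ω := by field_simp
    have hD : (1:ℝ) + P2 * γ2 / (P1 * γ2 + ω) = (Pt * γ2 + ω) / (P1 * γ2 + ω) := by
      rw [hP2]; field_simp; ring
    have hBle : (1:ℝ) + Q2 * γ2 / (Q1 * γ2 + ω) ≤ (Pt * γ2 + ω) / (Q1 * γ2 + ω) := by
      rw [hB, div_le_div_iff₀ hdenQ hdenQ]
      nlinarith [mul_nonneg (mul_nonneg (sub_nonneg.mpr hsum) h2.le) hdenQ.le]
    have hPt2 : 0 < Pt * γ2 + ω := by positivity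
    have hposA : 0 < (1:ℝ) + Q1 * γ1 / ω := by positivity
    have hposB : 0 < (1:ℝ) + Q2 * γ2 / (Q1 * γ2 + ω) := by positivity
    have hposB' : 0 < (Pt * γ2 + ω) / (Q1 * γ2 + ω) := by positivity
    calc Real.logb 2 (1 + Q1 * γ1 / ω) + Real.logb 2 (1 + Q2 * γ2 / (Q1 * γ2 + ω))
        ≤ Real.logb 2 (1 + Q1 * γ1 / ω) + Real.logb 2 ((Pt * γ2 + ω) / (Q1 * γ2 + ω)) := by
          exact add_le_add_right (Real.logb_le_logb_of_le hb2 hposB hBle) _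
      _ = Real.logb 2 ((1 + Q1 * γ1 / ω) * ((Pt * γ2 + ω) / (Q1 * γ2 + ω))) := by
          rw [Real.logb_mul (ne_of_gt hposA) (ne_of_gt hposB')]
      _ ≤ Real.logb 2 ((1 + P1 * γ1 / ω) * ((Pt * γ2 + ω) / (P1 * γ2 + ω))) := by
          apply Real.logb_le_logb_of_le hb2 (by positivity)
          rw [hA, hC, div_mul_div_comm, div_mul_div_comm,
            div_le_div_iff₀ (by positivity) (by positivity)]
          nlinarith [mul_nonneg (mul_nonneg (mul_nonneg (sub_nonneg.mpr hQ1P1)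
            (by linarith : (0:ℝ) ≤ γ1 - γ2)) (mul_pos hω hPt2).le) hω.le]
      _ = Real.logb 2 (1 + P1 * γ1 / ω) + Real.logb 2 (1 + P2 * γ2 / (P1 * γ2 + ω)) := by
          rw [hD, Real.logb_mul (by rw[hC]; positivity) (by positivity)]
end

section
/- Let γ_1 > γ_2 > 0, ω > 0, P_t > 0, P_tol ≥ 0, and φ_2 > 1. Define P_1 = P_t/2 − P_tol/(2γ_1) and P_2 = P_t/2 + P_tol/(2γ_1), and assume P_1 ≥ 0 and the weak user's rate constraint holds at this point: P_2γ_2 ≥ (φ_2 − 1)(P_1γ_2 + ω). Then: (a) the SIC constraint holds with equality, (P_2 − P_1)·γ_1 = P_tol; and (b) for all Q_1, Q_2 ≥ 0 with Q_1 + Q_2 ≤ P_t, Q_2γ_2 ≥ (φ_2 − 1)(Q_1γ_2 + ω), and (Q_2 − Q_1)·γ_1 ≥ P_tol, the sum throughput satisfies log₂(1 + Q_1γ_1/ω) + log₂(1 + Q_2γ_2/(Q_1γ_2 + ω)) ≤ log₂(1 + P_1γ_1/ω) + log₂(1 + P_2γ_2/(P_1γ_2 + ω)). -/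
/-- 2-user downlink NOMA, case where the SIC constraint is binding: with
`P1 = Pt/2 - Ptol/(2γ1)` and `P2 = Pt/2 + Ptol/(2γ1)`,
(a) the SIC constraint holds with equality, and (b) this allocation maximizes
the sum throughput among all feasible allocations. -/
theorem dl_noma_two_user_opt_sic_binding
    (γ1 γ2 ω Pt Ptol φ2 : ℝ) (h12 : γ2 < γ1) (h2 : 0 < γ2) (hω : 0 < ω)
    (hPt : 0 < Pt) (hPtol : 0 ≤ Ptol) (hφ : 1 < φ2)
    (P1 P2 : ℝ)
    (hP1 : P1 = Pt / 2 - Ptol / (2 * γ1))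
    (hP2 : P2 = Pt / 2 + Ptol / (2 * γ1))
    (hP1nn : 0 ≤ P1)
    (hrate : P2 * γ2 ≥ (φ2 - 1) * (P1 * γ2 + ω)) :
    (P2 - P1) * γ1 = Ptol ∧
    ∀ Q1 Q2 : ℝ, 0 ≤ Q1 → 0 ≤ Q2 → Q1 + Q2 ≤ Pt →
      Q2 * γ2 ≥ (φ2 - 1) * (Q1 * γ2 + ω) → (Q2 - Q1) * γ1 ≥ Ptol →
      Real.logb 2 (1 + Q1 * γ1 / ω) + Real.logb 2 (1 + Q2 * γ2 / (Q1 * γ2 + ω))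
        ≤ Real.logb 2 (1 + P1 * γ1 / ω) + Real.logb 2 (1 + P2 * γ2 / (P1 * γ2 + ω)) := by
  have hγ1 : 0 < γ1 := lt_trans h2 h12
  have hsum : P1 + P2 = Pt := by rw [hP1, hP2]; ring
  constructor
  · rw [hP1, hP2]
    field_simp
    ring
  · intro Q1 Q2 hQ1 hQ2 hQsum hQrate hQsic
    have hP1' : P1 * (2 * γ1) = Pt * γ1 - Ptol := by
      rw [hP1]; field_simp
    have hQ1le : Q1 ≤ P1 := by nlinarith
    have hP2nn : 0 ≤ P2 := by nlinarith
    -- denominators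
    have dQ : 0 < Q1 * γ2 + ω := by positivity
    have dP : 0 < P1 * γ2 + ω := by positivity
    have nQ1 : 0 < ω + Q1 * γ1 := by positivity
    have nP1 : 0 < ω + P1 * γ1 := by positivity
    have nQ2 : 0 < Q1 * γ2 + ω + Q2 * γ2 := by positivity
    have nP2 : 0 < P1 * γ2 + ω + P2 * γ2 := by positivity
    have e1 : 1 + Q1 * γ1 / ω = (ω + Q1 * γ1) / ω := by field_simp
    have e2 : 1 + Q2 * γ2 / (Q1 * γ2 + ω) = (Q1 * γ2 + ω + Q2 * γ2) / (Q1 * γ2 + ω) := by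
      field_simp
    have e3 : 1 + P1 * γ1 / ω = (ω + P1 * γ1) / ω := by field_simp
    have e4 : 1 + P2 * γ2 / (P1 * γ2 + ω) = (P1 * γ2 + ω + P2 * γ2) / (P1 * γ2 + ω) := by
      field_simp
    rw [e1, e2, e3, e4]
    rw [← Real.logb_mul (by positivity) (by positivity),
        ← Real.logb_mul (by positivity) (by positivity)]
    apply Real.logb_le_logb_of_le (by norm_num) (by positivity)
    rw [div_mul_div_comm, div_mul_div_comm, div_le_div_iff₀ (by positivity) (by positivity)]
    have hPeq : P1 * γ2 + ω + P2 * γ2 = Pt * γ2 + ω := by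
      linear_combination γ2 * hsum
    have hPt2 : 0 < Pt * γ2 + ω := by positivity
    have hA : Q1 * γ2 + ω + Q2 * γ2 ≤ Pt * γ2 + ω := by nlinarith
    have key1 : (ω + Q1 * γ1) * (P1 * γ2 + ω) ≤ (ω + P1 * γ1) * (Q1 * γ2 + ω) := by
      nlinarith [mul_nonneg (mul_nonneg hω.le (sub_nonneg.2 hQ1le)) (sub_nonneg.2 h12.le)]
    rw [hPeq]
    calc (ω + Q1 * γ1) * (Q1 * γ2 + ω + Q2 * γ2) * (ω * (P1 * γ2 + ω))
        ≤ (ω + Q1 * γ1) * (Pt * γ2 + ω) * (ω * (P1 * γ2 + ω)) := by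
          exact mul_le_mul_of_nonneg_right (mul_le_mul_of_nonneg_left hA nQ1.le)
            (mul_nonneg hω.le dP.le)
      _ ≤ (ω + P1 * γ1) * (Pt * γ2 + ω) * (ω * (Q1 * γ2 + ω)) := by
          have h := mul_le_mul_of_nonneg_left key1 (mul_nonneg hω.le hPt2.le)
          linarith [h]
end

section
/- Let m ≥ 2, let γ_1,…,γ_m > 0, let ω ≥ 0, let P_t be a real number, and let φ_2,…,φ_m > 0. Define P_1 = P_t/(∏_{j=2}^m φ_j) − Σ_{j=2}^m ω(φ_j − 1)/(γ_j·∏_{k=2}^j φ_k), and for each i = 2,…,m define P_i = (φ_i − 1)·[ P_t/(∏_{j=i}^m φ_j) − Σ_{j=i}^m ω(φ_j − 1)/(γ_j·∏_{k=i}^j φ_k) + ω/γ_i ]. Then Σ_{i=1}^m P_i = P_t, and for every i = 2,…,m the rate constraint of user i holds with equality: P_iγ_i = (φ_i − 1)·(Σ_{j=1}^{i−1} P_jγ_i + ω). -/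
/-- Closed-form downlink NOMA power allocation (Lemma 2, case where all
minimum-rate constraints of users 2..m are binding): the powers sum to `Pt`
and every rate constraint holds with equality. -/
theorem dl_noma_closed_form_all_rate_binding
    (m : ℕ) (hm : 2 ≤ m) (γ φ : ℕ → ℝ) (ω Pt : ℝ)
    (hγ : ∀ i ∈ Finset.Icc 1 m, 0 < γ i)
    (hω : 0 ≤ ω)
    (hφ : ∀ j ∈ Finset.Icc 2 m, 0 < φ j)
    (P : ℕ → ℝ)
    (hP1 : P 1 = Pt / (∏ j ∈ Finset.Icc 2 m, φ j)
        - ∑ j ∈ Finset.Icc 2 m, ω * (φ j - 1) / (γ j * ∏ k ∈ Finset.Icc 2 j, φ k))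
    (hPi : ∀ i ∈ Finset.Icc 2 m, P i = (φ i - 1) *
        (Pt / (∏ j ∈ Finset.Icc i m, φ j)
          - ∑ j ∈ Finset.Icc i m, ω * (φ j - 1) / (γ j * ∏ k ∈ Finset.Icc i j, φ k)
          + ω / γ i)) :
    (∑ i ∈ Finset.Icc 1 m, P i = Pt) ∧
    ∀ i ∈ Finset.Icc 2 m,
      P i * γ i = (φ i - 1) * (∑ j ∈ Finset.Icc 1 (i - 1), P j * γ i + ω) := by
  set S : ℕ → ℝ := fun i => Pt / (∏ j ∈ Finset.Icc i m, φ j)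
      - ∑ j ∈ Finset.Icc i m, ω * (φ j - 1) / (γ j * ∏ k ∈ Finset.Icc i j, φ k) with hSdef
  -- recursion
  have hrec : ∀ i, 2 ≤ i → i ≤ m → S (i + 1) = φ i * S i + ω * (φ i - 1) / γ i := by
    intro i h2 hle
    have hφi : φ i ≠ 0 := ne_of_gt (hφ i (Finset.mem_Icc.mpr ⟨h2, hle⟩))
    have hins : Finset.Icc i m = insert i (Finset.Icc (i + 1) m) := by
      rw [Finset.Icc_add_one_left_eq_Ioc, Finset.Ioc_insert_left hle]
    have hnot : i ∉ Finset.Icc (i + 1) m := by simp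
    have hSi : S i = (S (i + 1) - ω * (φ i - 1) / γ i) / φ i := by
      simp only [hSdef, hins, Finset.prod_insert hnot, Finset.sum_insert hnot]
      have hterm : ∀ j ∈ Finset.Icc (i + 1) m,
          ω * (φ j - 1) / (γ j * ∏ k ∈ Finset.Icc i j, φ k)
            = (ω * (φ j - 1) / (γ j * ∏ k ∈ Finset.Icc (i + 1) j, φ k)) / φ i := by
        intro j hj
        have hij : i ≤ j := le_trans (Nat.le_succ i) (Finset.mem_Icc.mp hj).1
        have : ∏ k ∈ Finset.Icc i j, φ k = φ i * ∏ k ∈ Finset.Icc (i + 1) j, φ k := by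
          rw [show Finset.Icc i j = insert i (Finset.Icc (i + 1) j) by
            rw [Finset.Icc_add_one_left_eq_Ioc, Finset.Ioc_insert_left hij],
            Finset.prod_insert (by simp)]
        rw [this, div_div]
        ring_nf
      rw [Finset.sum_congr rfl hterm, ← Finset.sum_div]
      have hself : ∏ k ∈ Finset.Icc i i, φ k = φ i := by simp
      rw [hself]
      ring
    rw [hSi, mul_div_cancel₀ _ hφi]
    ring
  -- partial sums
  have hsum : ∀ i, 1 ≤ i → i ≤ m → ∑ j ∈ Finset.Icc 1 i, P j = S (i + 1) := by
    intro i
    induction i with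
    | zero => omega
    | succ n ih =>
      intro h1 hle
      rcases Nat.eq_or_lt_of_le h1 with h | h
      · simp [← h, hP1, hSdef]
      · have hn1 : 1 ≤ n := by omega
        have hnm : n ≤ m := by omega
        have h2n : 2 ≤ n + 1 := by omega
        rw [Finset.sum_Icc_succ_top (by omega), ih hn1 hnm,
          hPi (n + 1) (Finset.mem_Icc.mpr ⟨h2n, hle⟩),
          hrec (n + 1) h2n hle]
        show S (n+1) + (φ (n+1) - 1) * (S (n+1) + ω / γ (n+1))
          = φ (n+1) * S (n+1) + ω * (φ (n+1) - 1) / γ (n+1)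
        ring
  have hSm : S (m + 1) = Pt := by
    simp [hSdef, Finset.Icc_eq_empty (by omega : ¬ m + 1 ≤ m)]
  constructor
  · rw [hsum m (by omega) le_rfl, hSm]
  · intro i hi
    obtain ⟨h2, hle⟩ := Finset.mem_Icc.mp hi
    have hγi : γ i ≠ 0 := ne_of_gt (hγ i (Finset.mem_Icc.mpr ⟨by omega, hle⟩))
    have hsum' : ∑ j ∈ Finset.Icc 1 (i - 1), P j * γ i = S i * γ i := by
      rw [← Finset.sum_mul, hsum (i - 1) (by omega) (by omega),
        show i - 1 + 1 = i by omega]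
    rw [hsum', hPi i hi]
    field_simp
    simp only [hSdef]
    ring
end

section
/- Let m ≥ 2, let γ_1,…,γ_{m−1} > 0, let P_tol be a real number, and let P_t be a real number. Define P_1 = P_t/2^{m−1} − Σ_{j=1}^{m−1} P_tol/(2^j·γ_j), and for each i = 2,…,m define P_i = P_t/2^{m−i+1} + P_tol/(2γ_{i−1}) − Σ_{j=i}^{m−1} P_tol/(2^{j−i+2}·γ_j). Then Σ_{i=1}^m P_i = P_t, and for every i = 2,…,m the SIC constraint holds with equality: (P_i − Σ_{j=1}^{i−1} P_j)·γ_{i−1} = P_tol. -/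
/-- Partial sums of the closed-form allocation. -/
lemma dl_noma_partial_sum
    (m : ℕ) (hm : 2 ≤ m) (γ : ℕ → ℝ) (Ptol Pt : ℝ)
    (P : ℕ → ℝ)
    (hP1 : P 1 = Pt / 2 ^ (m - 1)
        - ∑ j ∈ Finset.Icc 1 (m - 1), Ptol / (2 ^ j * γ j))
    (hPi : ∀ i ∈ Finset.Icc 2 m, P i = Pt / 2 ^ (m - i + 1)
        + Ptol / (2 * γ (i - 1))
        - ∑ j ∈ Finset.Icc i (m - 1), Ptol / (2 ^ (j - i + 2) * γ j)) :
    ∀ k, 1 ≤ k → k ≤ m →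
      ∑ i ∈ Finset.Icc 1 k, P i
        = Pt / 2 ^ (m - k) - ∑ j ∈ Finset.Icc k (m - 1), Ptol / (2 ^ (j - k + 1) * γ j) := by
  intro k
  induction k with
  | zero => intro h; omega
  | succ k ih =>
    intro h1 h2
    rcases Nat.eq_zero_or_pos k with hk0 | hk1
    · subst hk0
      simp only [Finset.Icc_self, Finset.sum_singleton]
      rw [hP1]
      congr 1
      apply Finset.sum_congr rfl
      intro j hj
      simp only [Finset.mem_Icc] at hj
      have : j - 1 + 1 = j := by omega
      rw [this]
    · have hkm : k ≤ m - 1 := by omega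
      rw [Finset.sum_Icc_succ_top (by omega : 1 ≤ k + 1), ih hk1 (by omega)]
      rw [hPi (k + 1) (by simp only [Finset.mem_Icc]; omega)]
      have hsplit : Finset.Icc k (m - 1) = Finset.Icc k k ∪ Finset.Icc (k + 1) (m - 1) := by
        ext x; simp only [Finset.mem_Icc, Finset.mem_union]; omega
      rw [hsplit, Finset.sum_union (by
        simp only [Finset.Icc_self, Finset.disjoint_singleton_left, Finset.mem_Icc]; omega)]
      simp only [Finset.Icc_self, Finset.sum_singleton]
      have e1 : k - k + 1 = 1 := by omega
      have e2 : m - (k + 1) + 1 = m - k := by omega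
      have e3 : (k + 1) - 1 = k := by omega
      rw [e1, e2, e3, pow_one]
      have hsum : ∑ j ∈ Finset.Icc (k + 1) (m - 1),
            (Ptol / (2 ^ (j - k + 1) * γ j) + Ptol / (2 ^ (j - (k + 1) + 2) * γ j))
          = ∑ j ∈ Finset.Icc (k + 1) (m - 1), Ptol / (2 ^ (j - (k + 1) + 1) * γ j) := by
        apply Finset.sum_congr rfl
        intro j hj
        simp only [Finset.mem_Icc] at hj
        have ea : j - k + 1 = (j - (k + 1) + 1) + 1 := by omega
        have eb : j - (k + 1) + 2 = (j - (k + 1) + 1) + 1 := by omega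
        rw [ea, eb, pow_succ]
        rcases eq_or_ne (γ j) 0 with h0 | h0
        · simp [h0]
        · field_simp
          ring
      have hPt : Pt / 2 ^ (m - k) + Pt / 2 ^ (m - k) = Pt / 2 ^ (m - (k + 1)) := by
        have : (2 : ℝ) ^ (m - k) = 2 ^ (m - (k + 1)) * 2 := by
          rw [← pow_succ]; congr 1; omega
        rw [this]
        field_simp
        ring
      calc Pt / 2 ^ (m - k) -
          (Ptol / (2 * γ k) + ∑ j ∈ Finset.Icc (k + 1) (m - 1), Ptol / (2 ^ (j - k + 1) * γ j)) +
          (Pt / 2 ^ (m - k) + Ptol / (2 * γ k) -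
            ∑ j ∈ Finset.Icc (k + 1) (m - 1), Ptol / (2 ^ (j - (k + 1) + 2) * γ j))
          = (Pt / 2 ^ (m - k) + Pt / 2 ^ (m - k)) -
            ∑ j ∈ Finset.Icc (k + 1) (m - 1),
              (Ptol / (2 ^ (j - k + 1) * γ j) + Ptol / (2 ^ (j - (k + 1) + 2) * γ j)) := by
            rw [Finset.sum_add_distrib]; ring
        _ = Pt / 2 ^ (m - (k + 1)) -
            ∑ j ∈ Finset.Icc (k + 1) (m - 1), Ptol / (2 ^ (j - (k + 1) + 1) * γ j) := by
            rw [hsum, hPt]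

/-- Closed-form downlink NOMA power allocation (Lemma 2, case where all SIC
constraints are binding): the powers sum to `Pt` and every SIC constraint
holds with equality. -/
theorem dl_noma_closed_form_all_sic_binding
    (m : ℕ) (hm : 2 ≤ m) (γ : ℕ → ℝ) (Ptol Pt : ℝ)
    (hγ : ∀ i ∈ Finset.Icc 1 (m - 1), 0 < γ i)
    (P : ℕ → ℝ)
    (hP1 : P 1 = Pt / 2 ^ (m - 1)
        - ∑ j ∈ Finset.Icc 1 (m - 1), Ptol / (2 ^ j * γ j))
    (hPi : ∀ i ∈ Finset.Icc 2 m, P i = Pt / 2 ^ (m - i + 1)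
        + Ptol / (2 * γ (i - 1))
        - ∑ j ∈ Finset.Icc i (m - 1), Ptol / (2 ^ (j - i + 2) * γ j)) :
    (∑ i ∈ Finset.Icc 1 m, P i = Pt) ∧
    ∀ i ∈ Finset.Icc 2 m,
      (P i - ∑ j ∈ Finset.Icc 1 (i - 1), P j) * γ (i - 1) = Ptol := by
  have key := dl_noma_partial_sum m hm γ Ptol Pt P hP1 hPi
  constructor
  · have h := key m (by omega) le_rfl
    rw [h]
    have : Finset.Icc m (m - 1) = ∅ := by
      apply Finset.Icc_eq_empty; omega
    simp [this]
  · intro i hi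
    simp only [Finset.mem_Icc] at hi
    have hS := key (i - 1) (by omega) (by omega)
    rw [hS, hPi i (by simp only [Finset.mem_Icc]; omega)]
    have e2 : m - (i - 1) = m - i + 1 := by omega
    rw [e2]
    have hsplit : Finset.Icc (i - 1) (m - 1)
        = Finset.Icc (i - 1) (i - 1) ∪ Finset.Icc i (m - 1) := by
      ext x; simp only [Finset.mem_Icc, Finset.mem_union]; omega
    rw [hsplit, Finset.sum_union (by
      simp only [Finset.Icc_self, Finset.disjoint_singleton_left, Finset.mem_Icc]; omega)]
    simp only [Finset.Icc_self, Finset.sum_singleton]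
    have e3 : i - 1 - (i - 1) + 1 = 1 := by omega
    rw [e3, pow_one]
    have hsum : ∑ j ∈ Finset.Icc i (m - 1), Ptol / (2 ^ (j - (i - 1) + 1) * γ j)
        = ∑ j ∈ Finset.Icc i (m - 1), Ptol / (2 ^ (j - i + 2) * γ j) := by
      apply Finset.sum_congr rfl
      intro j hj
      simp only [Finset.mem_Icc] at hj
      obtain ⟨hi2, him⟩ := hi
      have h4 : j - (i - 1) + 1 = j - i + 2 := by omega
      rw [h4]
    rw [hsum]
    have hγi : 0 < γ (i - 1) := hγ (i - 1) (by simp only [Finset.mem_Icc]; omega)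
    field_simp
    ring
end

section
/- Let γ_1 > γ_2 > γ_3 > 0, ω ≥ 0, P_t real, P_tol real, and φ_2 > 0. Define P_1 = P_t/(2φ_2) − ω(φ_2 − 1)/(φ_2γ_2) − P_tol/(2φ_2γ_2), P_2 = P_t(φ_2 − 1)/(2φ_2) + ω(φ_2 − 1)/(φ_2γ_2) − P_tol(φ_2 − 1)/(2φ_2γ_2), and P_3 = P_t/2 + P_tol/(2γ_2). Then P_1 + P_2 + P_3 = P_t, user 2's rate constraint holds with equality, P_2γ_2 = (φ_2 − 1)(P_1γ_2 + ω), and the SIC constraint for user 3 holds with equality, (P_3 − P_1 − P_2)·γ_2 = P_tol. -/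
/-- 3-user downlink NOMA closed-form allocation where user 2's rate constraint
and user 3's SIC constraint are binding. -/
theorem dl_noma_three_user_rate2_sic3_binding
    (γ1 γ2 γ3 ω Pt Ptol φ2 : ℝ)
    (h12 : γ2 < γ1) (h23 : γ3 < γ2) (h3 : 0 < γ3)
    (hω : 0 ≤ ω) (hφ : 0 < φ2)
    (P1 P2 P3 : ℝ)
    (hP1 : P1 = Pt / (2 * φ2) - ω * (φ2 - 1) / (φ2 * γ2) - Ptol / (2 * φ2 * γ2))
    (hP2 : P2 = Pt * (φ2 - 1) / (2 * φ2) + ω * (φ2 - 1) / (φ2 * γ2)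
        - Ptol * (φ2 - 1) / (2 * φ2 * γ2))
    (hP3 : P3 = Pt / 2 + Ptol / (2 * γ2)) :
    P1 + P2 + P3 = Pt ∧
    P2 * γ2 = (φ2 - 1) * (P1 * γ2 + ω) ∧
    (P3 - P1 - P2) * γ2 = Ptol := by
  have hγ2 : γ2 ≠ 0 := (h3.trans h23).ne'
  have hφ2 : φ2 ≠ 0 := hφ.ne'
  subst hP1 hP2 hP3
  refine ⟨by field_simp; ring, by field_simp; ring, by field_simp; ring⟩
end

section
/- Let γ_1 > γ_2 > γ_3 > 0, ω ≥ 0, P_t real, P_tol real, and φ_3 > 0. Define P_1 = P_t/(2φ_3) − P_tol/(2γ_1) − ω(φ_3 − 1)/(2φ_3γ_3), P_2 = P_t/(2φ_3) + P_tol/(2γ_1) − ω(φ_3 − 1)/(2φ_3γ_3), and P_3 = P_t(φ_3 − 1)/φ_3 + ω(φ_3 − 1)/(φ_3γ_3). Then P_1 + P_2 + P_3 = P_t, the SIC constraint for user 2 holds with equality, (P_2 − P_1)·γ_1 = P_tol, and user 3's rate constraint holds with equality, P_3γ_3 = (φ_3 − 1)((P_1 + P_2)γ_3 + ω). -/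
/-- 3-user downlink NOMA closed-form allocation where user 2's SIC constraint
and user 3's rate constraint are binding. -/
theorem dl_noma_three_user_sic2_rate3_binding
    (γ1 γ2 γ3 ω Pt Ptol φ3 : ℝ)
    (h12 : γ2 < γ1) (h23 : γ3 < γ2) (h3 : 0 < γ3)
    (hω : 0 ≤ ω) (hφ : 0 < φ3)
    (P1 P2 P3 : ℝ)
    (hP1 : P1 = Pt / (2 * φ3) - Ptol / (2 * γ1) - ω * (φ3 - 1) / (2 * φ3 * γ3))
    (hP2 : P2 = Pt / (2 * φ3) + Ptol / (2 * γ1) - ω * (φ3 - 1) / (2 * φ3 * γ3))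
    (hP3 : P3 = Pt * (φ3 - 1) / φ3 + ω * (φ3 - 1) / (φ3 * γ3)) :
    P1 + P2 + P3 = Pt ∧
    (P2 - P1) * γ1 = Ptol ∧
    P3 * γ3 = (φ3 - 1) * ((P1 + P2) * γ3 + ω) := by
  have hγ1 : γ1 ≠ 0 := by linarith
  have hγ3 : γ3 ≠ 0 := ne_of_gt h3
  have hφ3 : φ3 ≠ 0 := ne_of_gt hφ
  subst hP1 hP2 hP3
  refine ⟨?_, ?_, ?_⟩ <;> field_simp <;> ring
end

section
/- Let γ_1 > γ_2 > γ_3 > γ_4 > 0, ω ≥ 0, P_t real, and φ_2, φ_3, φ_4 > 0. Define P_1 = P_t/(φ_2φ_3φ_4) − ω(φ_2−1)/(φ_2γ_2) − ω(φ_3−1)/(φ_2φ_3γ_3) − ω(φ_4−1)/(φ_2φ_3φ_4γ_4), P_2 = P_t(φ_2−1)/(φ_2φ_3φ_4) + ω(φ_2−1)/(φ_2γ_2) − ω(φ_2−1)(φ_3−1)/(φ_2φ_3γ_3) − ω(φ_2−1)(φ_4−1)/(φ_2φ_3φ_4γ_4), P_3 = P_t(φ_3−1)/(φ_3φ_4)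 + ω(φ_3−1)/(φ_3γ_3) − ω(φ_3−1)(φ_4−1)/(φ_3φ_4γ_4), and P_4 = P_t(φ_4−1)/φ_4 + ω(φ_4−1)/(φ_4γ_4). Then P_1 + P_2 + P_3 + P_4 = P_t and for each i = 2, 3, 4 the rate constraint holds with equality: P_iγ_i = (φ_i − 1)·(Σ_{j=1}^{i−1} P_jγ_i + ω). -/
set_option maxHeartbeats 2000000


/-- 4-user downlink NOMA closed-form allocation (Appendix A) where the rate
constraints of users 2, 3, 4 are binding: the powers sum to `Pt` and each rate
constraint holds with equality. -/
theorem dl_noma_four_user_all_rate_binding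
    (γ1 γ2 γ3 γ4 ω Pt φ2 φ3 φ4 : ℝ)
    (h12 : γ2 < γ1) (h23 : γ3 < γ2) (h34 : γ4 < γ3) (h4 : 0 < γ4)
    (hω : 0 ≤ ω) (hφ2 : 0 < φ2) (hφ3 : 0 < φ3) (hφ4 : 0 < φ4)
    (P1 P2 P3 P4 : ℝ)
    (hP1 : P1 = Pt / (φ2 * φ3 * φ4) - ω * (φ2 - 1) / (φ2 * γ2)
        - ω * (φ3 - 1) / (φ2 * φ3 * γ3) - ω * (φ4 - 1) / (φ2 * φ3 * φ4 * γ4))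
    (hP2 : P2 = Pt * (φ2 - 1) / (φ2 * φ3 * φ4) + ω * (φ2 - 1) / (φ2 * γ2)
        - ω * (φ2 - 1) * (φ3 - 1) / (φ2 * φ3 * γ3)
        - ω * (φ2 - 1) * (φ4 - 1) / (φ2 * φ3 * φ4 * γ4))
    (hP3 : P3 = Pt * (φ3 - 1) / (φ3 * φ4) + ω * (φ3 - 1) / (φ3 * γ3)
        - ω * (φ3 - 1) * (φ4 - 1) / (φ3 * φ4 * γ4))
    (hP4 : P4 = Pt * (φ4 - 1) / φ4 + ω * (φ4 - 1) / (φ4 * γ4)) :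
    P1 + P2 + P3 + P4 = Pt ∧
    P2 * γ2 = (φ2 - 1) * (P1 * γ2 + ω) ∧
    P3 * γ3 = (φ3 - 1) * ((P1 + P2) * γ3 + ω) ∧
    P4 * γ4 = (φ4 - 1) * ((P1 + P2 + P3) * γ4 + ω) := by
  have hg4 : γ4 ≠ 0 := ne_of_gt h4
  have hg3 : γ3 ≠ 0 := ne_of_gt (h4.trans h34)
  have hg2 : γ2 ≠ 0 := ne_of_gt ((h4.trans h34).trans h23)
  have h2 : φ2 ≠ 0 := ne_of_gt hφ2
  have h3 : φ3 ≠ 0 := ne_of_gt hφ3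
  have h4' : φ4 ≠ 0 := ne_of_gt hφ4
  subst hP1 hP2 hP3 hP4
  refine ⟨?_, ?_, ?_, ?_⟩ <;> field_simp <;> ring
end
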